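/- In the modified Scarf instance (A',b',C') with artificial 0-th row and column, every feasible cardinal basis obtained by a cardinal pivot contains the 0-th column. Consequently, for every Scarf pair (B,O) with 0 = B \ O, the cardinal pivot (B,O) → (B',O) satisfies B' ≠ O; hence Scarf's algorithm can only terminate immediately after an ordinal pivot. -/
import Mathlib


/-- In the modified Scarf instance with an artificial `0`-th row and column (the `0`-th
row of `A'` is the unit vector `e₀`), every cardinal basis contains the `0`-th column;
consequently, for every Scarf pair `(B,O)` with `0 = B \ O`, the cardinal basis `B'`
produced by a cardinal pivot differs from `O`, so the algorithm can only terminate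
immediately after an ordinal pivot. -/
theorem cardinal_basis_contains_zero (n m : ℕ)
    (A' : Matrix (Fin (n+1)) (Fin (m+1)) ℝ)
    (hrow0 : ∀ j : Fin (m+1), A' 0 j = if j = 0 then 1 else 0) :
    ∀ B' : Finset (Fin (m+1)), B'.card = n + 1 →
      LinearIndependent ℝ (fun j : B' => fun i => A' i (j : Fin (m+1))) →
      (0 : Fin (m+1)) ∈ B' ∧
      ∀ O : Finset (Fin (m+1)), (0 : Fin (m+1)) ∉ O → B' ≠ O := by
  intro B' hcard hli
  have h0 : (0 : Fin (m+1)) ∈ B' := by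
    by_contra h0
    -- all columns in B' vanish at row 0, so they lie in ker (proj 0)
    set S : Submodule ℝ (Fin (n+1) → ℝ) :=
      LinearMap.ker (LinearMap.proj (R := ℝ) (φ := fun _ : Fin (n+1) => ℝ) 0)
    have hmem : ∀ j : B', (fun i => A' i (j : Fin (m+1))) ∈ S := by
      intro j
      have : (j : Fin (m+1)) ≠ 0 := fun hj => h0 (hj ▸ j.2)
      simp [S, LinearMap.mem_ker, hrow0, this]
    have hspan : Submodule.span ℝ
        (Set.range (fun j : B' => fun i => A' i (j : Fin (m+1)))) ≤ S := by
      rw [Submodule.span_le]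
      rintro v ⟨j, rfl⟩
      exact hmem j
    have hfr : Module.finrank ℝ
        (Submodule.span ℝ (Set.range (fun j : B' => fun i => A' i (j : Fin (m+1)))))
        = n + 1 := by
      rw [finrank_span_eq_card hli]
      simp [hcard]
    have hSrank : Module.finrank ℝ S ≤ n := by
      have h1 : Module.finrank ℝ (LinearMap.range
          (LinearMap.proj (R := ℝ) (φ := fun _ : Fin (n+1) => ℝ) 0))
          + Module.finrank ℝ S
          = Module.finrank ℝ (Fin (n+1) → ℝ) :=
        LinearMap.finrank_range_add_finrank_ker _
      have hsurj : Function.Surjective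
          (LinearMap.proj (R := ℝ) (φ := fun _ : Fin (n+1) => ℝ) 0) := by
        intro x; exact ⟨fun _ => x, rfl⟩
      rw [LinearMap.range_eq_top.mpr hsurj] at h1
      simp [Module.finrank_pi] at h1
      omega
    have := Submodule.finrank_mono hspan
    omega
  refine ⟨h0, fun O hO hne => hO (hne ▸ h0)⟩
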